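/- Let Q be a finite acyclic quiver and β an arrow of Q whose source is not the target of any arrow. Let Q' be the quiver obtained from Q by deleting β. Then the representation space of Q decomposes as 𝒜 ≅ 𝒜' × Hom(V_{s(β)}, V_{t(β)}) with ‖ρ‖² = ‖π(ρ)‖² + ‖ρ_β‖², and for every vertex a the moment map components satisfy Φ(ρ)_a = Ψ(π(ρ))_a + k(a)·√(-1)·(component involving ρ_β), where Ψ is the moment map of Q', k(a) = −1 if a = s(β), k(a) = +1 if a = t(β) ≠ s(β), and k(a) = 0 otherwise, and the ρ_β-term is ρ_β*ρ_β at a = s(β) and ρ_βρ_β* at a = t(β). -/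
import Mathlib


open Matrix

/-- The moment map `Φ_θ` for the action of `K = Π_a U(d_a)` on the representation space
`𝒜 = ⊕_α Hom(ℂ^{d(s α)}, ℂ^{d(t α)})` of a quiver, with `Lie(K)*` identified with the
space of tuples of matrices via the trace inner product:
`Φ(ρ)_a = √-1 (λ_a·id + Σ_{t α = a} ρ_α ρ_α* − Σ_{s α = a} ρ_α* ρ_α)`. -/
noncomputable def quiverMomentMap {Q0 Q1 : Type} [Fintype Q1] [DecidableEq Q0]
    (s t : Q1 → Q0) (d : Q0 → ℕ) (lam : Q0 → ℝ)
    (ρ : ∀ α : Q1, Matrix (Fin (d (t α))) (Fin (d (s α))) ℂ) (a : Q0) :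
    Matrix (Fin (d a)) (Fin (d a)) ℂ :=
  Complex.I • ((lam a : ℂ) • (1 : Matrix (Fin (d a)) (Fin (d a)) ℂ)
    + (∑ α : Q1, if h : t α = a then h ▸ (ρ α * (ρ α)ᴴ) else 0)
    - (∑ α : Q1, if h : s α = a then h ▸ ((ρ α)ᴴ * ρ α) else 0))

attribute [local instance] Matrix.frobeniusNormedAddCommGroup

/-- Deleting an arrow `β` whose source is not the target of any arrow decomposes the
representation space as `𝒜 ≅ 𝒜' × Hom(V_{s β}, V_{t β})` with
`‖ρ‖² = ‖π(ρ)‖² + ‖ρ_β‖²`, and the moment map of `Q` differs from that of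
`Q' = Q ∖ {β}` only at the vertices `s β` (by `−√-1·ρ_β*ρ_β`) and `t β`
(by `+√-1·ρ_β ρ_β*`). -/

lemma sum_split_ne {M Q1 : Type*} [AddCommMonoid M] [Fintype Q1] [DecidableEq Q1]
    (β : Q1) (f : Q1 → M) :
    ∑ α : Q1, f α = (∑ α : {α : Q1 // α ≠ β}, f α.1) + f β := by
  rw [← Finset.sum_erase_add _ _ (Finset.mem_univ β)]
  congr 1
  exact Finset.sum_subtype (Finset.univ.erase β)
    (fun x => by simp [Finset.mem_erase]) f

theorem moment_map_delete_arrow {Q0 Q1 : Type} [Fintype Q0] [Fintype Q1]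
    [DecidableEq Q0] [DecidableEq Q1] (s t : Q1 → Q0) (d : Q0 → ℕ) (lam : Q0 → ℝ)
    (hacyclic : ¬ ∃ (l : ℕ) (c : ℕ → Q1), 1 ≤ l ∧
      (∀ i, i + 1 < l → t (c i) = s (c (i + 1))) ∧ s (c 0) = t (c (l - 1)))
    (β : Q1) (hβ : ∀ α : Q1, t α ≠ s β)
    (ρ : ∀ α : Q1, Matrix (Fin (d (t α))) (Fin (d (s α))) ℂ) :
    (∑ α : Q1, ‖ρ α‖ ^ 2) = (∑ α : {α : Q1 // α ≠ β}, ‖ρ α.1‖ ^ 2) + ‖ρ β‖ ^ 2 ∧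
    (∀ a : Q0, a ≠ s β → a ≠ t β →
      quiverMomentMap s t d lam ρ a =
        quiverMomentMap (fun α : {α : Q1 // α ≠ β} => s α.1)
          (fun α => t α.1) d lam (fun α => ρ α.1) a) ∧
    quiverMomentMap s t d lam ρ (s β) =
      quiverMomentMap (fun α : {α : Q1 // α ≠ β} => s α.1)
        (fun α => t α.1) d lam (fun α => ρ α.1) (s β)
      - Complex.I • ((ρ β)ᴴ * ρ β) ∧
    quiverMomentMap s t d lam ρ (t β) =
      quiverMomentMap (fun α : {α : Q1 // α ≠ β} => s α.1)
        (fun α => t α.1) d lam (fun α => ρ α.1) (t β)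
      + Complex.I • (ρ β * (ρ β)ᴴ) := by
  have key : ∀ a : Q0,
      quiverMomentMap s t d lam ρ a =
        quiverMomentMap (fun α : {α : Q1 // α ≠ β} => s α.1)
          (fun α => t α.1) d lam (fun α => ρ α.1) a
        + Complex.I • (if h : t β = a then h ▸ (ρ β * (ρ β)ᴴ) else 0)
        - Complex.I • (if h : s β = a then h ▸ ((ρ β)ᴴ * ρ β) else 0) := by
    intro a
    simp only [quiverMomentMap]
    rw [sum_split_ne β, sum_split_ne β]
    simp only [smul_add, smul_sub]
    abel
  refine ⟨sum_split_ne β _, ?_, ?_, ?_⟩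
  · intro a ha1 ha2
    rw [key a, dif_neg (fun h => ha2 h.symm), dif_neg (fun h => ha1 h.symm)]
    simp
  · rw [key (s β), dif_neg (hβ β), dif_pos rfl]
    simp
  · rw [key (t β), dif_pos rfl, dif_neg (fun h => hβ β h.symm)]
    simp
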